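/- An observable on a state space S is postprocessing clean if and only if it is indecomposable (i.e., every nonzero effect of the observable is indecomposable). -/

import Mathlib

set_option linter.unusedSectionVars false
set_option maxHeartbeats 1000000


open scoped BigOperators

/-- A real-valued function on the state space `S` is affine if it respects convex
combinations of states. -/
def AffineOn {V : Type*} [NormedAddCommGroup V] [NormedSpace ℝ V] (S : Set V)
    (e : S → ℝ) : Prop :=
  ∀ (s₁ s₂ : S) (p : ℝ), 0 ≤ p → p ≤ 1 →
    ∀ h : p • (s₁ : V) + (1 - p) • (s₂ : V) ∈ S,
      e ⟨p • (s₁ : V) + (1 - p) • (s₂ : V), h⟩ = p * e s₁ + (1 - p) * e s₂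

/-- An effect on `S`: an affine function with values in `[0,1]`. -/
def IsEffectFn {V : Type*} [NormedAddCommGroup V] [NormedSpace ℝ V] (S : Set V)
    (e : S → ℝ) : Prop :=
  AffineOn S e ∧ ∀ s, 0 ≤ e s ∧ e s ≤ 1

/-- An observable on the state space `S` with finite outcome set `Fin n`:
a family of effects summing to the unit effect. -/
structure Obs {V : Type*} [NormedAddCommGroup V] [NormedSpace ℝ V] (S : Set V) where
  n : ℕ
  eff : Fin n → S → ℝ
  affine : ∀ x, AffineOn S (eff x)
  nonneg : ∀ x s, 0 ≤ eff x s
  normalized : ∀ s, ∑ x, eff x s = 1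

variable {V : Type*} [NormedAddCommGroup V] [NormedSpace ℝ V] {S : Set V}

/-- `B` is a postprocessing of `A` (written `A → B`): `B` is obtained from `A` by a
stochastic matrix. -/
def Postprocess (A B : Obs S) : Prop :=
  ∃ ν : Fin A.n → Fin B.n → ℝ,
    (∀ x y, 0 ≤ ν x y) ∧ (∀ x, ∑ y, ν x y = 1) ∧
    ∀ y s, B.eff y s = ∑ x, ν x y * A.eff x s

/-- Postprocessing equivalence `A ↔ B`. -/
def PPEquiv (A B : Obs S) : Prop := Postprocess A B ∧ Postprocess B A

/-- `A` is postprocessing clean: whenever `B → A` also `A → B`. -/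
def PPClean (A : Obs S) : Prop := ∀ B : Obs S, Postprocess B A → Postprocess A B

/-- A nonzero effect is indecomposable if in any decomposition into two nonzero
effects, both summands are positive scalar multiples of it. -/
def IsIndecomposableEffect (S : Set V) (e : S → ℝ) : Prop :=
  e ≠ 0 ∧ ∀ e₁ e₂ : S → ℝ, IsEffectFn S e₁ → IsEffectFn S e₂ → e₁ ≠ 0 → e₂ ≠ 0 →
    e = e₁ + e₂ →
    (∃ c : ℝ, 0 < c ∧ e₁ = c • e) ∧ (∃ c : ℝ, 0 < c ∧ e₂ = c • e)

/-- An observable is indecomposable if all its nonzero effects are indecomposable. -/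
def IndecomposableObs (A : Obs S) : Prop :=
  ∀ x, A.eff x ≠ 0 → IsIndecomposableEffect S (A.eff x)

/-- An observable is extreme if any convex decomposition into observables with the
same outcome set is trivial. -/
def ExtremeObs (A : Obs S) : Prop :=
  ∀ B C : Fin A.n → S → ℝ,
    (∀ x, AffineOn S (B x)) → (∀ x s, 0 ≤ B x s) → (∀ s, ∑ x, B x s = 1) →
    (∀ x, AffineOn S (C x)) → (∀ x s, 0 ≤ C x s) → (∀ s, ∑ x, C x s = 1) →
    ∀ lam : ℝ, 0 < lam → lam < 1 →
      (∀ x, A.eff x = lam • B x + (1 - lam) • C x) →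
      B = A.eff ∧ C = A.eff

/-- `A` is simulable by the set of observables `𝓑`: `A` is obtained by mixing
finitely many members of `𝓑` (with a common outcome set) and postprocessing. -/
def Simulable (𝓑 : Set (Obs S)) (A : Obs S) : Prop :=
  ∃ (m k : ℕ) (B : Fin m → Obs S) (hk : ∀ i, (B i).n = k)
    (p : Fin m → ℝ) (ν : Fin m → Fin k → Fin A.n → ℝ),
    (∀ i, B i ∈ 𝓑) ∧
    (∀ i, 0 ≤ p i) ∧ (∑ i, p i = 1) ∧
    (∀ i x y, 0 ≤ ν i x y) ∧ (∀ i x, ∑ y, ν i x y = 1) ∧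
    ∀ y s, A.eff y s = ∑ i, ∑ x, p i * ν i x y * (B i).eff (Fin.cast (hk i).symm x) s

/-- The set of all `𝓑`-simulable observables. -/
def simSet (𝓑 : Set (Obs S)) : Set (Obs S) := {A | Simulable 𝓑 A}

/-- `A` is simulation irreducible: it can only be simulated by sets containing an
observable postprocessing equivalent to it. -/
def SimIrreducible (A : Obs S) : Prop :=
  ∀ 𝓑 : Set (Obs S), Simulable 𝓑 A → ∃ B ∈ 𝓑, PPEquiv A B


section Aux

variable {V : Type*} [NormedAddCommGroup V] [NormedSpace ℝ V] {S : Set V}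

lemma effCongr (e : S → ℝ) {s₁ s₂ : S} (h : (s₁ : V) = (s₂ : V)) : e s₁ = e s₂ := by
  congr 1; exact Subtype.ext h

lemma AffineOn.addFn {e f : S → ℝ} (he : AffineOn S e) (hf : AffineOn S f) :
    AffineOn S (e + f) := by
  intro s₁ s₂ p hp hp1 h
  simp only [Pi.add_apply, he s₁ s₂ p hp hp1 h, hf s₁ s₂ p hp hp1 h]; ring

lemma AffineOn.smulFn {e : S → ℝ} (he : AffineOn S e) (c : ℝ) :
    AffineOn S (c • e) := by
  intro s₁ s₂ p hp hp1 h
  simp only [Pi.smul_apply, smul_eq_mul, he s₁ s₂ p hp hp1 h]; ring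

lemma AffineOn.subFn {e f : S → ℝ} (he : AffineOn S e) (hf : AffineOn S f) :
    AffineOn S (e - f) := by
  intro s₁ s₂ p hp hp1 h
  simp only [Pi.sub_apply, he s₁ s₂ p hp hp1 h, hf s₁ s₂ p hp hp1 h]; ring

/-- The submodule of affine functions on `S`. -/
def affSub (S : Set V) : Submodule ℝ (S → ℝ) where
  carrier := {e | AffineOn S e}
  add_mem' := fun he hf => he.addFn hf
  zero_mem' := by intro s₁ s₂ p hp hp1 h; simp
  smul_mem' := fun c _ he => he.smulFn c

lemma affine_convex_sum (hSconv : Convex ℝ S) {e : S → ℝ} (he : AffineOn S e)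
    {ι : Type*} (F : Finset ι) (w : ι → ℝ) (t : ι → S)
    (hw0 : ∀ i ∈ F, 0 ≤ w i) (hw1 : ∑ i ∈ F, w i = 1)
    (s : S) (hs : (s : V) = ∑ i ∈ F, w i • (t i : V)) :
    e s = ∑ i ∈ F, w i * e (t i) := by
  classical
  induction F using Finset.induction generalizing w s with
  | empty => simp at hw1
  | @insert a F ha ih =>
    rw [Finset.sum_insert ha] at hw1 hs ⊢
    by_cases hr : ∑ i ∈ F, w i = 0
    · have hwa : w a = 1 := by linarith
      have hz : ∀ i ∈ F, w i = 0 := by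
        intro i hi
        exact (Finset.sum_eq_zero_iff_of_nonneg
          (fun j hj => hw0 j (Finset.mem_insert_of_mem hj))).mp hr i hi
      have hs' : (s : V) = (t a : V) := by
        rw [hs, hwa, one_smul, Finset.sum_eq_zero (fun i hi => by rw [hz i hi, zero_smul]),
          add_zero]
      rw [effCongr e hs', hwa, one_mul,
        Finset.sum_eq_zero (fun i hi => by rw [hz i hi, zero_mul]), add_zero]
    · have hr0 : (0:ℝ) ≤ ∑ i ∈ F, w i :=
        Finset.sum_nonneg (fun j hj => hw0 j (Finset.mem_insert_of_mem hj))
      set r := ∑ i ∈ F, w i with hrdef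
      have hrpos : (0:ℝ) < r := lt_of_le_of_ne hr0 (Ne.symm hr)
      have h1r : (1:ℝ) - w a = r := by linarith
      have hq : (∑ i ∈ F, (w i / r) • (t i : V)) ∈ S := by
        apply hSconv.sum_mem
        · exact fun i hi => div_nonneg (hw0 i (Finset.mem_insert_of_mem hi)) hr0
        · rw [← Finset.sum_div, ← hrdef, div_self hr]
        · exact fun i _ => (t i).2
      set q : S := ⟨∑ i ∈ F, (w i / r) • (t i : V), hq⟩ with hqdef
      have hsum_q : r • (q : V) = ∑ i ∈ F, w i • (t i : V) := by
        show r • (∑ i ∈ F, (w i / r) • (t i : V)) = _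
        rw [Finset.smul_sum]
        exact Finset.sum_congr rfl fun i _ => by
          rw [smul_smul, mul_div_cancel₀ _ hr]
      have hwa0 : 0 ≤ w a := hw0 a (Finset.mem_insert_self a F)
      have hwa1 : w a ≤ 1 := by linarith
      have hveq : (s : V) = w a • (t a : V) + (1 - w a) • (q : V) := by
        rw [hs, h1r, hsum_q]
      have hmem : w a • (t a : V) + (1 - w a) • (q : V) ∈ S := hveq ▸ s.2
      have hkey := he (t a) q (w a) hwa0 hwa1 hmem
      have hse : e s = e ⟨w a • (t a : V) + (1 - w a) • (q : V), hmem⟩ := effCongr e hveq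
      have hqval : e q = ∑ i ∈ F, (w i / r) * e (t i) := by
        refine ih (fun i => w i / r)
          (fun i hi => div_nonneg (hw0 i (Finset.mem_insert_of_mem hi)) hr0)
          (by rw [← Finset.sum_div, ← hrdef, div_self hr]) q rfl
      rw [hse, hkey, hqval, h1r, Finset.mul_sum]
      congr 1
      exact Finset.sum_congr rfl fun i _ => by rw [← mul_assoc, mul_div_cancel₀ _ hr]

lemma affine_affine_sum (hSconv : Convex ℝ S) {e : S → ℝ} (he : AffineOn S e)
    {ι : Type*} (F : Finset ι) (w : ι → ℝ) (t : ι → S)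
    (hw1 : ∑ i ∈ F, w i = 1)
    (s : S) (hs : (s : V) = ∑ i ∈ F, w i • (t i : V)) :
    e s = ∑ i ∈ F, w i * e (t i) := by
  classical
  set P := F.filter (fun i => 0 ≤ w i) with hP
  set N := F.filter (fun i => ¬ 0 ≤ w i) with hN
  have hsplit : ∀ g : ι → ℝ, ∑ i ∈ F, g i = ∑ i ∈ P, g i + ∑ i ∈ N, g i := fun g =>
    (Finset.sum_filter_add_sum_filter_not F _ g).symm
  have hsplitV : ∀ g : ι → V, ∑ i ∈ F, g i = ∑ i ∈ P, g i + ∑ i ∈ N, g i := fun g =>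
    (Finset.sum_filter_add_sum_filter_not F _ g).symm
  set a := ∑ i ∈ P, w i with ha
  set b := ∑ i ∈ N, (-w i) with hb
  have hb0 : 0 ≤ b := Finset.sum_nonneg fun i hi => by
    have := (Finset.mem_filter.mp hi).2; linarith
  have hbneg : b = - ∑ i ∈ N, w i := by
    rw [hb]; exact Finset.sum_neg_distrib w
  have hab : a - b = 1 := by
    have h := hsplit w
    rw [hw1] at h
    rw [hbneg]; linarith
  have hapos : (0:ℝ) < a := by linarith
  have hane : a ≠ 0 := ne_of_gt hapos
  -- the convex-combination point from the positive part
  have hqS : (∑ i ∈ P, (w i / a) • (t i : V)) ∈ S := by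
    apply hSconv.sum_mem
    · exact fun i hi => div_nonneg (Finset.mem_filter.mp hi).2 (le_of_lt hapos)
    · rw [← Finset.sum_div, ← ha, div_self hane]
    · exact fun i _ => (t i).2
  set sq : S := ⟨∑ i ∈ P, (w i / a) • (t i : V), hqS⟩ with hsq
  have E1 : e sq = ∑ i ∈ P, (w i / a) * e (t i) :=
    affine_convex_sum hSconv he P (fun i => w i / a) t
      (fun i hi => div_nonneg (Finset.mem_filter.mp hi).2 (le_of_lt hapos))
      (by rw [← Finset.sum_div, ← ha, div_self hane]) sq rfl
  set F' : Finset (Option ι) := insert none (N.map Function.Embedding.some) with hF'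
  have hnone : (none : Option ι) ∉ N.map Function.Embedding.some := by simp
  set w' : Option ι → ℝ := fun o => o.elim (1/a) (fun i => (-w i)/a) with hw'
  set t' : Option ι → S := fun o => o.elim s t with ht'
  have hsum' : ∑ o ∈ F', w' o = 1 := by
    rw [hF', Finset.sum_insert hnone, Finset.sum_map]
    simp only [Function.Embedding.some_apply, hw', Option.elim]
    rw [← Finset.sum_div, ← hb, ← add_div, show 1 + b = a by linarith, div_self hane]
  have hwnn : ∀ o ∈ F', 0 ≤ w' o := by
    intro o ho
    rw [hF', Finset.mem_insert] at ho
    rcases ho with rfl | ho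
    · simp only [hw', Option.elim]; positivity
    · rcases Finset.mem_map.mp ho with ⟨i, hi, rfl⟩
      have hni := (Finset.mem_filter.mp hi).2
      simp only [hw', Function.Embedding.some_apply, Option.elim]
      have hwi : 0 ≤ -w i := by linarith
      positivity
  have haq : a • (sq : V) = ∑ i ∈ P, w i • (t i : V) := by
    show a • (∑ i ∈ P, (w i / a) • (t i : V)) = _
    rw [Finset.smul_sum]
    exact Finset.sum_congr rfl fun i _ => by rw [smul_smul, mul_div_cancel₀ _ hane]
  have hPs : ∑ i ∈ P, w i • (t i : V) = (s : V) + ∑ i ∈ N, (-w i) • (t i : V) := by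
    have h := hsplitV (fun i => w i • (t i : V))
    rw [← hs] at h
    have hneg : ∑ i ∈ N, (-w i) • (t i : V) = -∑ i ∈ N, w i • (t i : V) := by
      simp [neg_smul]
    rw [hneg, h]
    abel
  have hveq0 : (sq : V) = a⁻¹ • ((s : V) + ∑ i ∈ N, (-w i) • (t i : V)) := by
    rw [← hPs, ← haq, smul_smul, inv_mul_cancel₀ hane, one_smul]
  have hveq : (sq : V) = ∑ o ∈ F', w' o • (t' o : V) := by
    rw [hveq0, hF', Finset.sum_insert hnone, Finset.sum_map]
    simp only [Function.Embedding.some_apply, hw', ht', Option.elim]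
    rw [smul_add, Finset.smul_sum]
    congr 1
    · rw [one_div]
    · exact Finset.sum_congr rfl fun i _ => by rw [smul_smul, div_eq_inv_mul]
  have E2 : e sq = ∑ o ∈ F', w' o * e (t' o) :=
    affine_convex_sum hSconv he F' w' t' hwnn hsum' sq hveq
  rw [Finset.sum_insert hnone, Finset.sum_map] at E2
  simp only [Function.Embedding.some_apply, hw', ht', Option.elim] at E2
  -- now combine
  have hSP : ∑ i ∈ P, (w i / a) * e (t i) = (∑ i ∈ P, w i * e (t i)) / a := by
    rw [Finset.sum_div]; exact Finset.sum_congr rfl fun i _ => by ring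
  have hSN : ∑ i ∈ N, (-w i / a) * e (t i) = -(∑ i ∈ N, w i * e (t i)) / a := by
    have h1 : ∑ i ∈ N, (-w i / a) * e (t i) = ∑ i ∈ N, -(w i * e (t i) / a) :=
      Finset.sum_congr rfl fun i _ => by ring
    rw [h1, Finset.sum_neg_distrib, neg_div, ← Finset.sum_div]
  rw [E1] at E2
  rw [hSP, hSN] at E2
  rw [hsplit (fun i => w i * e (t i))]
  have h1a : 1/a * e s = e s / a := by ring
  rw [h1a] at E2
  field_simp at E2
  linarith

lemma affSub_finiteDimensional [FiniteDimensional ℝ V] (hSconv : Convex ℝ S) :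
    FiniteDimensional ℝ (affSub S) := by
  classical
  obtain ⟨T, hTsub, hTspan, hTind⟩ := exists_affineIndependent ℝ V S
  have hTfin : T.Finite := finite_set_of_fin_dim_affineIndependent ℝ hTind
  haveI := hTfin.fintype
  set L : affSub S →ₗ[ℝ] (↥T → ℝ) :=
    { toFun := fun e i => (e : S → ℝ) ⟨i.1, hTsub i.2⟩
      map_add' := fun e f => rfl
      map_smul' := fun c e => rfl } with hLdef
  have hker : ∀ g : affSub S, L g = 0 → g = 0 := by
    intro g hg
    apply Subtype.ext
    funext s
    set p : ↥T → V := Subtype.val with hp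
    have hmem : (s : V) ∈ affineSpan ℝ (Set.range p) := by
      rw [hp, Subtype.range_coe, hTspan]
      exact subset_affineSpan ℝ S s.2
    obtain ⟨fs, w, hw1, hcomb⟩ := eq_affineCombination_of_mem_affineSpan hmem
    have hlin : (s : V) = ∑ i ∈ fs, w i • p i := by
      rw [hcomb]; exact Finset.affineCombination_eq_linear_combination fs p w hw1
    have hval := affine_affine_sum hSconv g.2 fs w (fun i => ⟨p i, hTsub i.2⟩) hw1 s hlin
    show (g : S → ℝ) s = 0
    rw [hval]
    apply Finset.sum_eq_zero
    intro i _
    have hz : (g : S → ℝ) ⟨p i, hTsub i.2⟩ = 0 := congrFun hg i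
    rw [hz, mul_zero]
  have hL : Function.Injective L :=
    LinearMap.ker_eq_bot.mp (LinearMap.ker_eq_bot'.mpr hker)
  exact FiniteDimensional.of_injective L hL


/-- The "face" of the cone of nonnegative affine functions generated by `e`. -/
def Fe (S : Set V) (e : S → ℝ) : Set (S → ℝ) :=
  {f | AffineOn S f ∧ (∀ s, 0 ≤ f s) ∧ ∃ c : ℝ, 0 < c ∧ ∀ s, f s ≤ c * e s}

lemma Fe_subset_affSub (e : S → ℝ) : Fe S e ⊆ (affSub S : Set (S → ℝ)) :=
  fun _ hf => hf.1

lemma span_Fe_bound {h g : S → ℝ} (hg : g ∈ Submodule.span ℝ (Fe S h)) :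
    ∃ C : ℝ, 0 ≤ C ∧ ∀ s, |g s| ≤ C * h s := by
  induction hg using Submodule.span_induction with
  | mem f hf =>
    obtain ⟨_, hf0, c, hc, hfc⟩ := hf
    exact ⟨c, le_of_lt hc, fun s => by rw [abs_of_nonneg (hf0 s)]; exact hfc s⟩
  | zero => exact ⟨0, le_rfl, by simp⟩
  | add x y _ _ hx hy =>
    obtain ⟨C1, hC1, h1⟩ := hx
    obtain ⟨C2, hC2, h2⟩ := hy
    refine ⟨C1 + C2, by linarith, fun s => ?_⟩
    have := abs_add_le (x s) (y s)
    have := h1 s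
    have := h2 s
    simp only [Pi.add_apply]
    nlinarith [abs_nonneg (x s), abs_nonneg (y s)]
  | smul a x _ hx =>
    obtain ⟨C, hC, h1⟩ := hx
    refine ⟨|a| * C, by positivity, fun s => ?_⟩
    rw [Pi.smul_apply, smul_eq_mul, abs_mul, mul_assoc]
    exact mul_le_mul_of_nonneg_left (h1 s) (abs_nonneg a)

/-- A nonzero nonnegative function has a strictly positive value somewhere. -/
lemma exists_pos_of_ne_zero {f : S → ℝ} (hf0 : ∀ s, 0 ≤ f s) (hne : f ≠ 0) :
    ∃ s, 0 < f s := by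
  by_contra hc
  push_neg at hc
  exact hne (funext fun s => le_antisymm (hc s) (hf0 s))

/-- A finite sum of affine functions is affine. -/
lemma AffineOn.finsetSum {ι : Type*} {g : ι → S → ℝ} (F : Finset ι)
    (hg : ∀ j ∈ F, AffineOn S (g j)) : AffineOn S (∑ j ∈ F, g j) := by
  classical
  induction F using Finset.induction with
  | empty => intro s₁ s₂ p hp hp1 hm; simp
  | @insert a F ha ih =>
    rw [Finset.sum_insert ha]
    exact ((hg a (Finset.mem_insert_self a F)).addFn
      (ih fun j hj => hg j (Finset.mem_insert_of_mem hj)))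

/-- If an indecomposable effect is a finite sum of effects, every nonzero summand is a
positive multiple of it. -/
lemma sum_indec {e : S → ℝ} (hee : IsEffectFn S e) (he : IsIndecomposableEffect S e)
    {k : ℕ} {g : Fin k → S → ℝ} (hg : ∀ j, IsEffectFn S (g j))
    (hsum : e = ∑ j, g j) (j₀ : Fin k) (hne : g j₀ ≠ 0) :
    ∃ c : ℝ, 0 < c ∧ g j₀ = c • e := by
  classical
  set G : S → ℝ := ∑ j ∈ Finset.univ.erase j₀, g j with hG
  have hsplit : e = g j₀ + G := by
    rw [hsum, hG, ← Finset.add_sum_erase _ _ (Finset.mem_univ j₀)]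
  have hG0 : ∀ s, 0 ≤ G s := by
    intro s
    rw [hG, Finset.sum_apply]
    exact Finset.sum_nonneg fun j _ => ((hg j).2 s).1
  by_cases hGz : G = 0
  · refine ⟨1, one_pos, ?_⟩
    rw [one_smul, hsplit, hGz, add_zero]
  · have hGaff : AffineOn S G := by
      rw [hG]; exact AffineOn.finsetSum _ fun j _ => (hg j).1
    have hGeff : IsEffectFn S G := by
      refine ⟨hGaff, fun s => ⟨hG0 s, ?_⟩⟩
      have h1 : g j₀ s + G s = e s := by rw [hsplit]; simp
      have h2 := ((hg j₀).2 s).1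
      have h3 := (hee.2 s).2
      linarith
    obtain ⟨⟨c, hc, hceq⟩, -⟩ := he.2 (g j₀) G (hg j₀) hGeff hne hGz hsplit
    exact ⟨c, hc, hceq⟩


/-- A positive multiple of an indecomposable effect is indecomposable. -/
lemma smul_indec {f : S → ℝ} (hf : IsEffectFn S f) (hind : IsIndecomposableEffect S f)
    {c : ℝ} (hc : 0 < c) : IsIndecomposableEffect S (c • f) := by
  constructor
  · intro hz
    apply hind.1
    funext s
    have h := congrFun hz s
    simp only [Pi.smul_apply, smul_eq_mul, Pi.zero_apply] at h
    rcases mul_eq_zero.mp h with h' | h'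
    · exact absurd h' (ne_of_gt hc)
    · simpa using h'
  · intro e₁ e₂ he₁ he₂ hn₁ hn₂ hsum
    have hsum' : f = c⁻¹ • e₁ + c⁻¹ • e₂ := by
      funext s
      have h := congrFun hsum s
      simp only [Pi.add_apply, Pi.smul_apply, smul_eq_mul] at h ⊢
      field_simp
      linarith
    have heffhalf : ∀ a : S → ℝ, IsEffectFn S a → (∀ s, a s ≤ c * f s) →
        IsEffectFn S (c⁻¹ • a) := by
      intro a ha hab
      refine ⟨ha.1.smulFn c⁻¹, fun s => ⟨?_, ?_⟩⟩
      · simp only [Pi.smul_apply, smul_eq_mul]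
        have := (ha.2 s).1
        positivity
      · simp only [Pi.smul_apply, smul_eq_mul]
        have h1 : c⁻¹ * a s ≤ c⁻¹ * (c * f s) :=
          mul_le_mul_of_nonneg_left (hab s) (by positivity)
        have h2 : c⁻¹ * (c * f s) = f s := by field_simp
        have := (hf.2 s).2
        linarith
    have hb1 : ∀ s, e₁ s ≤ c * f s := by
      intro s
      have h := congrFun hsum s
      simp only [Pi.add_apply, Pi.smul_apply, smul_eq_mul] at h
      have := (he₂.2 s).1
      linarith
    have hb2 : ∀ s, e₂ s ≤ c * f s := by
      intro s
      have h := congrFun hsum s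
      simp only [Pi.add_apply, Pi.smul_apply, smul_eq_mul] at h
      have := (he₁.2 s).1
      linarith
    have hz1 : c⁻¹ • e₁ ≠ 0 := by
      intro hz; apply hn₁; funext s
      have h := congrFun hz s
      simp only [Pi.smul_apply, smul_eq_mul, Pi.zero_apply] at h
      rcases mul_eq_zero.mp h with h' | h'
      · exact absurd h' (inv_ne_zero (ne_of_gt hc))
      · simpa using h'
    have hz2 : c⁻¹ • e₂ ≠ 0 := by
      intro hz; apply hn₂; funext s
      have h := congrFun hz s
      simp only [Pi.smul_apply, smul_eq_mul, Pi.zero_apply] at h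
      rcases mul_eq_zero.mp h with h' | h'
      · exact absurd h' (inv_ne_zero (ne_of_gt hc))
      · simpa using h'
    obtain ⟨⟨a1, ha1, heq1⟩, ⟨a2, ha2, heq2⟩⟩ :=
      hind.2 (c⁻¹ • e₁) (c⁻¹ • e₂) (heffhalf e₁ he₁ hb1) (heffhalf e₂ he₂ hb2) hz1 hz2 hsum'
    constructor
    · refine ⟨a1, ha1, ?_⟩
      funext s
      have h := congrFun heq1 s
      simp only [Pi.smul_apply, smul_eq_mul] at h ⊢
      field_simp at h
      linarith
    · refine ⟨a2, ha2, ?_⟩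
      funext s
      have h := congrFun heq2 s
      simp only [Pi.smul_apply, smul_eq_mul] at h ⊢
      field_simp at h
      linarith


/-- Every nonzero effect decomposes as a finite sum of indecomposable effects. -/
lemma decompose [FiniteDimensional ℝ V] (hSconv : Convex ℝ S) :
    ∀ (n : ℕ) (e : S → ℝ), IsEffectFn S e → e ≠ 0 →
      Module.finrank ℝ (Submodule.span ℝ (Fe S e)) ≤ n →
      ∃ (k : ℕ) (f : Fin k → S → ℝ),
        (∀ j, IsEffectFn S (f j) ∧ IsIndecomposableEffect S (f j)) ∧ e = ∑ j, f j := by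
  haveI hWfd : FiniteDimensional ℝ (affSub S) := affSub_finiteDimensional hSconv
  intro n
  induction n using Nat.strong_induction_on with
  | _ n ih =>
  intro e he hne hdim
  by_cases hind : IsIndecomposableEffect S e
  · exact ⟨1, fun _ => e, fun _ => ⟨he, hind⟩, by simp⟩
  have hB : ¬ ∀ e₁ e₂ : S → ℝ, IsEffectFn S e₁ → IsEffectFn S e₂ → e₁ ≠ 0 → e₂ ≠ 0 →
      e = e₁ + e₂ →
      (∃ c : ℝ, 0 < c ∧ e₁ = c • e) ∧ (∃ c : ℝ, 0 < c ∧ e₂ = c • e) :=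
    fun hB => hind ⟨hne, hB⟩
  push_neg at hB
  obtain ⟨e₁, e₂, he₁, he₂, hn₁, hn₂, hsum, hQ⟩ := hB
  have he0 : ∀ s, 0 ≤ e s := fun s => (he.2 s).1
  have hee : ∀ s, e s = e₁ s + e₂ s := fun s => congrFun hsum s
  obtain ⟨s₁, hs₁⟩ := exists_pos_of_ne_zero (fun s => (he₁.2 s).1) hn₁
  obtain ⟨sE, hsE⟩ := exists_pos_of_ne_zero he0 hne
  -- first boundary point
  set T₁ : Set ℝ := {t | 0 ≤ t ∧ ∀ s, t * e₁ s ≤ e s} with hT₁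
  have h1T : (1:ℝ) ∈ T₁ := ⟨zero_le_one, fun s => by
    have := (he₂.2 s).1; have := hee s; linarith⟩
  have hbdd : BddAbove T₁ := ⟨e s₁ / e₁ s₁, fun t ht => (le_div_iff₀ hs₁).mpr (ht.2 s₁)⟩
  set t₁ := sSup T₁ with ht₁def
  have ht₁ : 1 ≤ t₁ := le_csSup hbdd h1T
  have ht₁le : ∀ s, t₁ * e₁ s ≤ e s := by
    intro s
    by_cases hz : e₁ s = 0
    · rw [hz, mul_zero]; exact he0 s
    · have hpos : 0 < e₁ s := lt_of_le_of_ne ((he₁.2 s).1) (Ne.symm hz)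
      have hle : t₁ ≤ e s / e₁ s :=
        csSup_le ⟨1, h1T⟩ (fun t ht => (le_div_iff₀ hpos).mpr (ht.2 s))
      exact (le_div_iff₀ hpos).mp hle
  set h1 : S → ℝ := e - t₁ • e₁ with hh1
  have hh1app : ∀ s, h1 s = e s - t₁ * e₁ s := fun s => rfl
  have hh1aff : AffineOn S h1 := he.1.subFn (he₁.1.smulFn t₁)
  have hh10 : ∀ s, 0 ≤ h1 s := fun s => by rw [hh1app]; linarith [ht₁le s]
  have hh1le : ∀ s, h1 s ≤ e s := fun s => by
    rw [hh1app]
    have := (he₁.2 s).1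
    nlinarith
  by_cases hh1z : h1 = 0
  · exfalso
    have hkey : ∀ s, e s = t₁ * e₁ s := by
      intro s
      have := congrFun hh1z s
      rw [hh1app] at this
      simp at this
      linarith [this]
    have ht₁ne : t₁ ≠ 1 := by
      intro h1eq
      apply hn₂
      funext s
      have := hkey s
      rw [h1eq, one_mul] at this
      have := hee s
      simp; linarith
    have ht₁gt : 1 < t₁ := lt_of_le_of_ne ht₁ (Ne.symm ht₁ne)
    have ht₁pos : 0 < t₁ := by linarith
    have heq1 : e₁ = t₁⁻¹ • e := by
      funext s
      simp only [Pi.smul_apply, smul_eq_mul]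
      rw [hkey s]
      field_simp
    have hltinv : t₁⁻¹ < 1 := by
      rw [inv_lt_one_iff₀]; right; exact ht₁gt
    have heq2 : e₂ = (1 - t₁⁻¹) • e := by
      funext s
      simp only [Pi.smul_apply, smul_eq_mul]
      have h1s := hkey s
      have h2s := hee s
      have h3s : e₂ s = e s - e₁ s := by linarith
      rw [h3s]
      have he₁s : e₁ s = t₁⁻¹ * e s := by
        rw [h1s]; field_simp
      rw [he₁s]; ring
    exact hQ ⟨t₁⁻¹, by positivity, heq1⟩ (1 - t₁⁻¹) (by linarith) heq2
  -- second boundary point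
  obtain ⟨s₂, hs₂⟩ := exists_pos_of_ne_zero hh10 hh1z
  set T₂ : Set ℝ := {t | 0 ≤ t ∧ ∀ s, t * h1 s ≤ e s} with hT₂
  have h1T₂ : (1:ℝ) ∈ T₂ := ⟨zero_le_one, fun s => by rw [one_mul]; exact hh1le s⟩
  have hbdd₂ : BddAbove T₂ := ⟨e s₂ / h1 s₂, fun t ht => (le_div_iff₀ hs₂).mpr (ht.2 s₂)⟩
  set u₁ := sSup T₂ with hu₁def
  have hu₁ : 1 ≤ u₁ := le_csSup hbdd₂ h1T₂
  have hu₁le : ∀ s, u₁ * h1 s ≤ e s := by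
    intro s
    by_cases hz : h1 s = 0
    · rw [hz, mul_zero]; exact he0 s
    · have hpos : 0 < h1 s := lt_of_le_of_ne (hh10 s) (Ne.symm hz)
      have hle : u₁ ≤ e s / h1 s :=
        csSup_le ⟨1, h1T₂⟩ (fun t ht => (le_div_iff₀ hpos).mpr (ht.2 s))
      exact (le_div_iff₀ hpos).mp hle
  set h2 : S → ℝ := e - u₁ • h1 with hh2
  have hh2app : ∀ s, h2 s = e s - u₁ * h1 s := fun s => rfl
  have hh2aff : AffineOn S h2 := he.1.subFn (hh1aff.smulFn u₁)
  have hh20 : ∀ s, 0 ≤ h2 s := fun s => by rw [hh2app]; linarith [hu₁le s]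
  have hh2le : ∀ s, h2 s ≤ e s := fun s => by
    rw [hh2app]
    have := hh10 s
    nlinarith
  by_cases hh2z : h2 = 0
  · exfalso
    have hkey : ∀ s, e s = u₁ * h1 s := by
      intro s
      have := congrFun hh2z s
      rw [hh2app] at this
      simp at this
      linarith [this]
    have hu₁ne : u₁ ≠ 1 := by
      intro h1eq
      apply hn₁
      funext s
      have hk := hkey s
      rw [h1eq, one_mul, hh1app] at hk
      have ht₁pos : 0 < t₁ := by linarith
      have : e₁ s = 0 := by
        have : t₁ * e₁ s = 0 := by linarith
        rcases mul_eq_zero.mp this with h' | h'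
        · exact absurd h' (ne_of_gt ht₁pos)
        · exact h'
      simpa using this
    have hu₁gt : 1 < u₁ := lt_of_le_of_ne hu₁ (Ne.symm hu₁ne)
    have ht₁pos : 0 < t₁ := by linarith
    have hu₁pos : 0 < u₁ := by linarith
    set c₁ := (u₁ - 1)/(u₁ * t₁) with hc₁def
    have hc₁pos : 0 < c₁ := by
      apply div_pos (by linarith) (by positivity)
    have he₁eq : e₁ = c₁ • e := by
      funext s
      have hk := hkey s
      rw [hh1app] at hk
      simp only [Pi.smul_apply, smul_eq_mul, hc₁def]
      field_simp
      ring_nf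
      nlinarith [hk]
    have he₂eq : e₂ = (1 - c₁) • e := by
      funext s
      have h2s := hee s
      have h1s := congrFun he₁eq s
      simp only [Pi.smul_apply, smul_eq_mul] at h1s ⊢
      linarith
    have hc₂pos : 0 < 1 - c₁ := by
      obtain ⟨s₃, hs₃⟩ := exists_pos_of_ne_zero (fun s => (he₂.2 s).1) hn₂
      have h2s := congrFun he₂eq s₃
      simp only [Pi.smul_apply, smul_eq_mul] at h2s
      by_contra hcon
      push_neg at hcon
      have he3 : 0 ≤ e s₃ := he0 s₃
      nlinarith
    exact hQ ⟨c₁, hc₁pos, he₁eq⟩ (1 - c₁) hc₂pos he₂eq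
  -- main case: both remainders nonzero
  have hnotmem1 : e₁ ∉ Submodule.span ℝ (Fe S h1) := by
    intro hmem
    obtain ⟨C, hC0, hCb⟩ := span_Fe_bound hmem
    have hCpos : 0 < C := by
      rcases lt_or_eq_of_le hC0 with h | h
      · exact h
      · exfalso
        apply hn₁
        funext s
        have := hCb s
        rw [← h, zero_mul] at this
        have h2 := abs_nonneg (e₁ s)
        have : |e₁ s| = 0 := le_antisymm this h2
        simpa using abs_eq_zero.mp this
    have hmemT : t₁ + C⁻¹ ∈ T₁ := by
      refine ⟨by positivity, fun s => ?_⟩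
      have hb : e₁ s ≤ C * h1 s := le_trans (le_abs_self _) (hCb s)
      have hinv : C⁻¹ * e₁ s ≤ h1 s := by
        have := mul_le_mul_of_nonneg_left hb (le_of_lt (inv_pos.mpr hCpos))
        calc C⁻¹ * e₁ s ≤ C⁻¹ * (C * h1 s) := this
        _ = h1 s := by field_simp
      have hh := hh1app s
      have ht := ht₁le s
      nlinarith [hinv]
    have : t₁ + C⁻¹ ≤ t₁ := le_csSup hbdd hmemT
    have : (0:ℝ) < C⁻¹ := by positivity
    linarith
  have hnotmem2 : h1 ∉ Submodule.span ℝ (Fe S h2) := by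
    intro hmem
    obtain ⟨C, hC0, hCb⟩ := span_Fe_bound hmem
    have hCpos : 0 < C := by
      rcases lt_or_eq_of_le hC0 with h | h
      · exact h
      · exfalso
        apply hh1z
        funext s
        have := hCb s
        rw [← h, zero_mul] at this
        have h2 := abs_nonneg (h1 s)
        have : |h1 s| = 0 := le_antisymm this h2
        simpa using abs_eq_zero.mp this
    have hmemT : u₁ + C⁻¹ ∈ T₂ := by
      refine ⟨by positivity, fun s => ?_⟩
      have hb : h1 s ≤ C * h2 s := le_trans (le_abs_self _) (hCb s)
      have hinv : C⁻¹ * h1 s ≤ h2 s := by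
        have := mul_le_mul_of_nonneg_left hb (le_of_lt (inv_pos.mpr hCpos))
        calc C⁻¹ * h1 s ≤ C⁻¹ * (C * h2 s) := this
        _ = h2 s := by field_simp
      have hh := hh2app s
      have ht := hu₁le s
      nlinarith [hinv]
    have : u₁ + C⁻¹ ≤ u₁ := le_csSup hbdd₂ hmemT
    have : (0:ℝ) < C⁻¹ := by positivity
    linarith
  have he₁Fe : e₁ ∈ Fe S e := by
    refine ⟨he₁.1, fun s => (he₁.2 s).1, 1, one_pos, fun s => ?_⟩
    rw [one_mul]
    have := (he₂.2 s).1
    have := hee s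
    linarith
  have hh1Fe : h1 ∈ Fe S e := ⟨hh1aff, hh10, 1, one_pos, fun s => by
    rw [one_mul]; exact hh1le s⟩
  have hFe1 : Fe S h1 ⊆ Fe S e := by
    rintro f ⟨faff, f0, c, hc, hfc⟩
    refine ⟨faff, f0, c, hc, fun s => le_trans (hfc s) ?_⟩
    exact mul_le_mul_of_nonneg_left (hh1le s) (le_of_lt hc)
  have hFe2 : Fe S h2 ⊆ Fe S e := by
    rintro f ⟨faff, f0, c, hc, hfc⟩
    refine ⟨faff, f0, c, hc, fun s => le_trans (hfc s) ?_⟩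
    exact mul_le_mul_of_nonneg_left (hh2le s) (le_of_lt hc)
  haveI hfde : FiniteDimensional ℝ (Submodule.span ℝ (Fe S e)) :=
    Submodule.finiteDimensional_of_le (Submodule.span_le.mpr (Fe_subset_affSub e))
  have hlt1 : Module.finrank ℝ (Submodule.span ℝ (Fe S h1)) <
      Module.finrank ℝ (Submodule.span ℝ (Fe S e)) := by
    apply Submodule.finrank_lt_finrank_of_lt
    refine lt_of_le_of_ne (Submodule.span_mono hFe1) ?_
    intro heq
    exact hnotmem1 (by rw [heq]; exact Submodule.subset_span he₁Fe)
  have hlt2 : Module.finrank ℝ (Submodule.span ℝ (Fe S h2)) <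
      Module.finrank ℝ (Submodule.span ℝ (Fe S e)) := by
    apply Submodule.finrank_lt_finrank_of_lt
    refine lt_of_le_of_ne (Submodule.span_mono hFe2) ?_
    intro heq
    exact hnotmem2 (by rw [heq]; exact Submodule.subset_span hh1Fe)
  have hh1eff : IsEffectFn S h1 :=
    ⟨hh1aff, fun s => ⟨hh10 s, le_trans (hh1le s) (he.2 s).2⟩⟩
  have hh2eff : IsEffectFn S h2 :=
    ⟨hh2aff, fun s => ⟨hh20 s, le_trans (hh2le s) (he.2 s).2⟩⟩
  obtain ⟨k1, f1, hf1, hsum1⟩ :=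
    ih _ (lt_of_lt_of_le hlt1 hdim) h1 hh1eff hh1z le_rfl
  obtain ⟨k2, f2, hf2, hsum2⟩ :=
    ih _ (lt_of_lt_of_le hlt2 hdim) h2 hh2eff hh2z le_rfl
  have hu₁pos : 0 < u₁ := by linarith
  have hf1le : ∀ i s, f1 i s ≤ h1 s := by
    intro i s
    have h := congrFun hsum1 s
    rw [Finset.sum_apply] at h
    rw [h]
    exact Finset.single_le_sum (fun j _ => ((hf1 j).1.2 s).1) (Finset.mem_univ i)
  refine ⟨k1 + k2, Fin.append (fun j => u₁ • f1 j) f2, ?_, ?_⟩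
  · intro j
    refine Fin.addCases ?_ ?_ j
    · intro i
      rw [Fin.append_left]
      have heffi : IsEffectFn S (u₁ • f1 i) := by
        refine ⟨((hf1 i).1.1).smulFn u₁, fun s => ⟨?_, ?_⟩⟩
        · simp only [Pi.smul_apply, smul_eq_mul]
          have := ((hf1 i).1.2 s).1
          positivity
        · simp only [Pi.smul_apply, smul_eq_mul]
          have h1b := hf1le i s
          have h2b := hu₁le s
          have h3b := (he.2 s).2
          nlinarith
      exact ⟨heffi, smul_indec (hf1 i).1 (hf1 i).2 hu₁pos⟩
    · intro i
      rw [Fin.append_right]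
      exact hf2 i
  · rw [Fin.sum_univ_add]
    simp only [Fin.append_left, Fin.append_right]
    funext s
    rw [Pi.add_apply, Finset.sum_apply, Finset.sum_apply]
    have hs1 : ∑ i : Fin k1, (u₁ • f1 i) s = u₁ * h1 s := by
      have h := congrFun hsum1 s
      rw [Finset.sum_apply] at h
      simp only [Pi.smul_apply, smul_eq_mul]
      rw [← Finset.mul_sum, ← h]
    have hs2 : ∑ i : Fin k2, f2 i s = h2 s := by
      have h := congrFun hsum2 s
      rw [Finset.sum_apply] at h
      rw [← h]
    rw [hs1, hs2, hh2app]
    ring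

end Aux


/-- An observable on a state space `S` is postprocessing clean if and
only if it is indecomposable. -/
theorem statement0 {V : Type*} [NormedAddCommGroup V] [NormedSpace ℝ V]
    [FiniteDimensional ℝ V] {S : Set V}
    (hScomp : IsCompact S) (hSconv : Convex ℝ S) (hSne : S.Nonempty)
    (A : Obs S) :
    PPClean A ↔ IndecomposableObs A := by
  classical
  constructor
  · -- clean → indecomposable
    intro hclean x hxne
    have hAeff : ∀ y, IsEffectFn S (A.eff y) := fun y =>
      ⟨A.affine y, fun s => ⟨A.nonneg y s, by
        calc A.eff y s ≤ ∑ z, A.eff z s :=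
          Finset.single_le_sum (fun z _ => A.nonneg z s) (Finset.mem_univ y)
        _ = 1 := A.normalized s⟩⟩
    have hdec : ∀ y : Fin A.n, ∃ (k : ℕ) (f : Fin k → S → ℝ),
        (∀ j, IsEffectFn S (f j) ∧ IsIndecomposableEffect S (f j)) ∧ A.eff y = ∑ j, f j := by
      intro y
      by_cases hy : A.eff y = 0
      · exact ⟨0, Fin.elim0, fun j => j.elim0, by rw [hy]; simp⟩
      · exact decompose hSconv _ (A.eff y) (hAeff y) hy le_rfl
    choose k f hprop hsumf using hdec
    set σe := (Fintype.equivFin (Σ y : Fin A.n, Fin (k y))) with hσe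
    have hCnorm : ∀ s : S, ∑ i : Fin (Fintype.card (Σ y : Fin A.n, Fin (k y))),
        f (σe.symm i).1 (σe.symm i).2 s = 1 := by
      intro s
      rw [Equiv.sum_comp σe.symm (fun σ : (Σ y : Fin A.n, Fin (k y)) => f σ.1 σ.2 s)]
      rw [← Finset.univ_sigma_univ, Finset.sum_sigma]
      have hA : ∀ y, ∑ j, f y j s = A.eff y s := by
        intro y
        have h := congrFun (hsumf y) s
        rw [Finset.sum_apply] at h
        exact h.symm
      rw [Finset.sum_congr rfl (fun y _ => hA y)]
      exact A.normalized s
    set C : Obs S := ⟨Fintype.card (Σ y : Fin A.n, Fin (k y)),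
      fun i => f (σe.symm i).1 (σe.symm i).2,
      fun i => (hprop _ _).1.1,
      fun i s => ((hprop _ _).1.2 s).1,
      hCnorm⟩ with hC
    have hCA : Postprocess C A := by
      refine ⟨fun i y => if (σe.symm i).1 = y then 1 else 0, ?_, ?_, ?_⟩
      · intro i y; dsimp only; split <;> norm_num
      · intro i; simp
      · intro y s
        show A.eff y s = ∑ i, (if (σe.symm i).1 = y then 1 else 0) * f (σe.symm i).1 (σe.symm i).2 s
        rw [Equiv.sum_comp σe.symm
          (fun σ : (Σ y : Fin A.n, Fin (k y)) => (if σ.1 = y then 1 else 0) * f σ.1 σ.2 s)]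
        rw [← Finset.univ_sigma_univ, Finset.sum_sigma]
        have hA : ∀ y', ∑ j, (if y' = y then (1:ℝ) else 0) * f y' j s
            = if y' = y then A.eff y' s else 0 := by
          intro y'
          by_cases hyy : y' = y
          · rw [if_pos hyy]
            simp only [one_mul]
            have h := congrFun (hsumf y') s
            rw [Finset.sum_apply] at h
            rw [if_pos hyy, ← h]
          · rw [if_neg hyy]
            simp [hyy]
        rw [Finset.sum_congr rfl (fun y' _ => hA y')]
        simp
    obtain ⟨μ, hμ0, hμ1, hμeff⟩ := hclean C hCA
    have hex : ∃ i, μ x i ≠ 0 := by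
      by_contra hc
      push_neg at hc
      have h := hμ1 x
      rw [Finset.sum_eq_zero (fun i _ => hc i)] at h
      exact zero_ne_one h
    obtain ⟨i, hi⟩ := hex
    have hμpos : 0 < μ x i := lt_of_le_of_ne (hμ0 x i) (Ne.symm hi)
    have hCsum : C.eff i = ∑ y, (fun s => μ y i * A.eff y s) := by
      funext s
      rw [Finset.sum_apply]
      exact hμeff i s
    have hCeff : IsEffectFn S (C.eff i) :=
      ⟨C.affine i, fun s => ⟨C.nonneg i s, by
        calc C.eff i s ≤ ∑ z, C.eff z s :=
          Finset.single_le_sum (fun z _ => C.nonneg z s) (Finset.mem_univ i)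
        _ = 1 := C.normalized s⟩⟩
    have hCind : IsIndecomposableEffect S (C.eff i) := (hprop _ _).2
    have hμle1 : ∀ y, μ y i ≤ 1 := by
      intro y
      calc μ y i ≤ ∑ i', μ y i' :=
        Finset.single_le_sum (fun i' _ => hμ0 y i') (Finset.mem_univ i)
      _ = 1 := hμ1 y
    have hgeff : ∀ y, IsEffectFn S (fun s => μ y i * A.eff y s) := by
      intro y
      refine ⟨(A.affine y).smulFn (μ y i), fun s => ⟨?_, ?_⟩⟩
      · exact mul_nonneg (hμ0 y i) (A.nonneg y s)
      · have h1 := ((hAeff y).2 s).2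
        have h2 := A.nonneg y s
        have h3 := hμ0 y i
        have h4 := hμle1 y
        have := mul_le_mul h4 h1 h2 zero_le_one
        simpa using this
    have htne : (fun s => μ x i * A.eff x s) ≠ 0 := by
      obtain ⟨s, hs⟩ := exists_pos_of_ne_zero (A.nonneg x) hxne
      intro hz
      have h := congrFun hz s
      simp only [Pi.zero_apply] at h
      nlinarith
    obtain ⟨c, hc, hceq⟩ := sum_indec hCeff hCind hgeff hCsum x htne
    have hAx : A.eff x = (c / μ x i) • C.eff i := by
      funext s
      have h := congrFun hceq s
      simp only [Pi.smul_apply, smul_eq_mul] at h ⊢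
      field_simp
      linarith
    have hres := smul_indec hCeff hCind (div_pos hc hμpos)
    rwa [← hAx] at hres
  · -- indecomposable → clean
    rintro hind B ⟨ν, hν0, hν1, hνeff⟩
    obtain ⟨s₀, hs₀⟩ := hSne
    have hBn : 0 < B.n := by
      by_contra hc
      push_neg at hc
      have h := B.normalized ⟨s₀, hs₀⟩
      rw [Nat.le_zero] at hc
      rw [Finset.sum_eq_zero] at h
      · exact zero_ne_one h
      · intro x _
        exact absurd (lt_of_lt_of_le x.2 (le_of_eq hc)) (Nat.not_lt_zero _)
    set x₀ : Fin B.n := ⟨0, hBn⟩ with hx₀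
    have hνle1 : ∀ x y, ν x y ≤ 1 := by
      intro x y
      calc ν x y ≤ ∑ y', ν x y' :=
        Finset.single_le_sum (fun y' _ => hν0 x y') (Finset.mem_univ y)
      _ = 1 := hν1 x
    have hBle1 : ∀ x s, B.eff x s ≤ 1 := by
      intro x s
      calc B.eff x s ≤ ∑ x', B.eff x' s :=
        Finset.single_le_sum (fun x' _ => B.nonneg x' s) (Finset.mem_univ x)
      _ = 1 := B.normalized s
    have hAle1 : ∀ y s, A.eff y s ≤ 1 := by
      intro y s
      calc A.eff y s ≤ ∑ y', A.eff y' s :=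
        Finset.single_le_sum (fun y' _ => A.nonneg y' s) (Finset.mem_univ y)
      _ = 1 := A.normalized s
    have hAsum : ∀ y, A.eff y = ∑ x, (fun s => ν x y * B.eff x s) := by
      intro y
      funext s
      rw [Finset.sum_apply]
      exact hνeff y s
    have hgeff : ∀ y x, IsEffectFn S (fun s => ν x y * B.eff x s) := by
      intro y x
      refine ⟨(B.affine x).smulFn (ν x y), fun s => ⟨?_, ?_⟩⟩
      · exact mul_nonneg (hν0 x y) (B.nonneg x s)
      · have h1 := hBle1 x s
        have h2 := B.nonneg x s
        have h3 := hν0 x y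
        have h4 := hνle1 x y
        have := mul_le_mul h4 h1 h2 zero_le_one
        simpa using this
    have hchoice : ∀ y x, ∃ c : ℝ, ((fun s => ν x y * B.eff x s) ≠ 0 → A.eff y ≠ 0 →
        (0 < c ∧ (fun s => ν x y * B.eff x s) = c • A.eff y)) := by
      intro y x
      by_cases hg : (fun s => ν x y * B.eff x s) = 0
      · exact ⟨0, fun h => absurd hg h⟩
      · by_cases hy : A.eff y = 0
        · exact ⟨0, fun _ h => absurd hy h⟩
        · have hAy : IsEffectFn S (A.eff y) :=
            ⟨A.affine y, fun s => ⟨A.nonneg y s, hAle1 y s⟩⟩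
          obtain ⟨c, hcpos, hceq⟩ :=
            sum_indec hAy (hind y hy) (hgeff y) (hAsum y) x hg
          exact ⟨c, fun _ _ => ⟨hcpos, hceq⟩⟩
    choose cf hcf using hchoice
    set μ : Fin A.n → Fin B.n → ℝ := fun y x =>
      if A.eff y = 0 then (if x = x₀ then 1 else 0)
      else if (fun s => ν x y * B.eff x s) = 0 then 0 else cf y x with hμ
    have hterm : ∀ y x s, μ y x * A.eff y s = ν x y * B.eff x s := by
      intro y x s
      by_cases hy : A.eff y = 0
      · have hAys : A.eff y s = 0 := by rw [hy]; rfl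
        have hg : ν x y * B.eff x s = 0 := by
          have h := hνeff y s
          rw [hAys] at h
          exact (Finset.sum_eq_zero_iff_of_nonneg
            (fun x' _ => mul_nonneg (hν0 x' y) (B.nonneg x' s))).mp h.symm x (Finset.mem_univ x)
        rw [hAys, hg, mul_zero]
      · simp only [hμ, if_neg hy]
        by_cases hgz : (fun s => ν x y * B.eff x s) = 0
        · rw [if_pos hgz, zero_mul]
          exact (congrFun hgz s).symm
        · rw [if_neg hgz]
          obtain ⟨hcpos, hceq⟩ := hcf y x hgz hy
          have h := congrFun hceq s
          simp only [Pi.smul_apply, smul_eq_mul] at h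
          exact h.symm
    refine ⟨μ, ?_, ?_, ?_⟩
    · intro y x
      simp only [hμ]
      by_cases hy : A.eff y = 0
      · rw [if_pos hy]; split <;> norm_num
      · rw [if_neg hy]
        by_cases hgz : (fun s => ν x y * B.eff x s) = 0
        · rw [if_pos hgz]
        · rw [if_neg hgz]
          exact le_of_lt (hcf y x hgz hy).1
    · intro y
      by_cases hy : A.eff y = 0
      · simp only [hμ, if_pos hy]
        simp
      · obtain ⟨s, hs⟩ := exists_pos_of_ne_zero (A.nonneg y) hy
        have h1 : ∑ x, μ y x * A.eff y s = A.eff y s := by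
          rw [Finset.sum_congr rfl (fun x _ => hterm y x s)]
          exact (hνeff y s).symm
        rw [← Finset.sum_mul] at h1
        have := mul_right_cancel₀ (ne_of_gt hs) (h1.trans (one_mul (A.eff y s)).symm)
        exact this
    · intro x s
      rw [Finset.sum_congr rfl (fun y _ => hterm y x s), ← Finset.sum_mul, hν1 x, one_mul]
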